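/- Let G₁ and G₂ be groups and let f : G₁ → G₂ be a map satisfying f(a²ba⁻¹) = f(a)²·f(b)·f(a)⁻¹ for all a,b ∈ G₁. Then f(aba) = f(a)·f(b)·f(a) for all a,b ∈ G₁. -/

import Mathlib

/-- A map preserving the gyrogroup operation `a ⊙ b = a² b a⁻¹` satisfies
`f (a b a) = f a · f b · f a`. -/
theorem gyro_hom_eq_5 (G₁ G₂ : Type*) [Group G₁] [Group G₂] (f : G₁ → G₂)
    (hf : ∀ a b : G₁, f (a ^ 2 * b * a⁻¹) = (f a) ^ 2 * f b * (f a)⁻¹) :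
    ∀ a b : G₁, f (a * b * a) = f a * f b * f a := by
  have h1 : f 1 = 1 := by
    have h := hf 1 1
    simp only [one_pow, mul_one, one_mul, inv_one] at h
    rw [pow_two, mul_inv_cancel_right] at h
    exact (right_eq_mul.mp h)
  have hinv : ∀ a : G₁, f a⁻¹ = (f a)⁻¹ := by
    intro a
    have h := hf a a⁻¹
    have harg : a ^ 2 * a⁻¹ * a⁻¹ = 1 := by group
    rw [harg, h1, eq_comm, mul_inv_eq_one] at h
    have : f a⁻¹ = (f a ^ 2)⁻¹ * f a := by
      rw [eq_inv_mul_iff_mul_eq]; exact h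
    rw [this]; group
  intro a b
  have key1 := hf a (a⁻¹ * b * a ^ 2)
  have harg1 : a ^ 2 * (a⁻¹ * b * a ^ 2) * a⁻¹ = a * b * a := by group
  rw [harg1] at key1
  have key2 := hf a⁻¹ b⁻¹
  have harg2 : a⁻¹ ^ 2 * b⁻¹ * a⁻¹⁻¹ = (a⁻¹ * b * a ^ 2)⁻¹ := by group
  rw [harg2, hinv, hinv, hinv, inv_eq_iff_eq_inv] at key2
  rw [key1, key2]
  group
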